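/- Let F : ℝ^m → ℝ^k be a ReLU or hard-tanh network with fixed weights and biases, and let x(t) = x_0 + t(x_1 − x_0) be an affine trajectory with x_0 ≠ x_1. For each activation pattern P, the set {t ∈ ℝ : the activation pattern of F at x(t) equals P} is convex (an interval). Consequently, ℝ is partitioned into intervals separated by the neuron transition points, and every interval carries a unique activation pattern of the network. -/
import Mathlib


/-- Preactivations of a feedforward network with coordinatewise nonlinearity `φ`:
`h^{(0)} = W^{(0)} x + b^{(0)}` and `h^{(d+1)} = W^{(d+1)} φ(h^{(d)}) + b^{(d+1)}`. -/
noncomputable def preactNet {m k : ℕ} (φ : ℝ → ℝ) (W0 : Matrix (Fin k) (Fin m) ℝ)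
    (W : ℕ → Matrix (Fin k) (Fin k) ℝ) (b : ℕ → Fin k → ℝ) (x : Fin m → ℝ) :
    ℕ → Fin k → ℝ
  | 0 => W0.mulVec x + b 0
  | d + 1 => (W (d + 1)).mulVec (fun i => φ (preactNet φ W0 W b x d i)) + b (d + 1)

/-- Activation pattern of a ReLU network: for each hidden neuron, `1` if its preactivation
is positive (linear region where ReLU is the identity) and `0` otherwise. -/
noncomputable def reluPatternAt (m k n : ℕ) (W0 : Matrix (Fin k) (Fin m) ℝ)
    (W : ℕ → Matrix (Fin k) (Fin k) ℝ) (b : ℕ → Fin k → ℝ) (x : Fin m → ℝ) :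
    Fin n → Fin k → ℤ :=
  fun d i => if 0 < preactNet (fun u => max u 0) W0 W b x d i then 1 else 0

/-- Activation pattern of a hard-tanh network: for each hidden neuron, `−1`, `0` or `1`
according as its preactivation lies in `(−∞,−1]`, `(−1,1)` or `[1,∞)`. -/
noncomputable def htPatternAt (m k n : ℕ) (W0 : Matrix (Fin k) (Fin m) ℝ)
    (W : ℕ → Matrix (Fin k) (Fin k) ℝ) (b : ℕ → Fin k → ℝ) (x : Fin m → ℝ) :
    Fin n → Fin k → ℤ :=
  fun d i =>
    if preactNet (fun u => max (-1) (min 1 u)) W0 W b x d i ≤ -1 then -1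
    else if 1 ≤ preactNet (fun u => max (-1) (min 1 u)) W0 W b x d i then 1
    else 0


/-- Linearized network: `σ d i` replaces the nonlinearity at depth `d`, neuron `i`. -/
noncomputable def linNetAux {m k : ℕ} (σ : ℕ → Fin k → ℝ → ℝ) (W0 : Matrix (Fin k) (Fin m) ℝ)
    (W : ℕ → Matrix (Fin k) (Fin k) ℝ) (b : ℕ → Fin k → ℝ) (x : Fin m → ℝ) :
    ℕ → Fin k → ℝ
  | 0 => W0.mulVec x + b 0
  | d + 1 => (W (d + 1)).mulVec (fun i => σ d i (linNetAux σ W0 W b x d i)) + b (d + 1)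

/-- If `σ` is affine in its value argument, the linearized net is affine along an affine
trajectory. -/
lemma linNetAux_affine {m k : ℕ} (A B : ℕ → Fin k → ℝ) (W0 : Matrix (Fin k) (Fin m) ℝ)
    (W : ℕ → Matrix (Fin k) (Fin k) ℝ) (b : ℕ → Fin k → ℝ) (x₀ x₁ : Fin m → ℝ) :
    ∀ d : ℕ, ∃ a c : Fin k → ℝ, ∀ (t : ℝ) (i : Fin k),
      linNetAux (fun d i u => A d i * u + B d i) W0 W b
        (fun j => x₀ j + t * (x₁ j - x₀ j)) d i = a i * t + c i := by
  intro d
  induction d with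
  | zero =>
      refine ⟨fun i => ∑ j, W0 i j * (x₁ j - x₀ j),
        fun i => (∑ j, W0 i j * x₀ j) + b 0 i, fun t i => ?_⟩
      simp only [linNetAux, Matrix.mulVec, dotProduct, Pi.add_apply]
      rw [show (∑ j, W0 i j * (x₀ j + t * (x₁ j - x₀ j)))
          = (∑ j, W0 i j * (x₁ j - x₀ j)) * t + ∑ j, W0 i j * x₀ j by
        rw [Finset.sum_mul, ← Finset.sum_add_distrib]
        exact Finset.sum_congr rfl fun j _ => by ring]
      ring
  | succ d ih =>
      obtain ⟨a, c, hac⟩ := ih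
      refine ⟨fun i => ∑ j, W (d + 1) i j * (A d j * a j),
        fun i => (∑ j, W (d + 1) i j * (A d j * c j + B d j)) + b (d + 1) i, fun t i => ?_⟩
      simp only [linNetAux, Matrix.mulVec, dotProduct, Pi.add_apply]
      rw [show (∑ j, W (d + 1) i j * (A d j * (linNetAux (fun d i u => A d i * u + B d i)
            W0 W b (fun j => x₀ j + t * (x₁ j - x₀ j)) d j) + B d j))
          = (∑ j, W (d + 1) i j * (A d j * a j)) * t
            + ∑ j, W (d + 1) i j * (A d j * c j + B d j) by
        rw [Finset.sum_mul, ← Finset.sum_add_distrib]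
        exact Finset.sum_congr rfl fun j _ => by rw [hac t j]; ring]
      ring

/-- Key agreement lemma: if the pattern of `x` below depth `d` equals `P`, then
the true preactivations agree with the linearized ones at depth `d`. -/
lemma preactNet_eq_linNetAux {m k : ℕ} (φ : ℝ → ℝ) (g : ℝ → ℤ) (α β : ℤ → ℝ)
    (hcompat : ∀ v, φ v = α (g v) * v + β (g v))
    (P : ℕ → Fin k → ℤ) (W0 : Matrix (Fin k) (Fin m) ℝ)
    (W : ℕ → Matrix (Fin k) (Fin k) ℝ) (b : ℕ → Fin k → ℝ) (x : Fin m → ℝ) :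
    ∀ d : ℕ, (∀ d' : ℕ, d' < d → ∀ i, g (preactNet φ W0 W b x d' i) = P d' i) →
      ∀ i, preactNet φ W0 W b x d i
        = linNetAux (fun d i u => α (P d i) * u + β (P d i)) W0 W b x d i := by
  intro d
  induction d with
  | zero => intro _ i; rfl
  | succ d ih =>
      intro h i
      have hd : ∀ i, preactNet φ W0 W b x d i
          = linNetAux (fun d i u => α (P d i) * u + β (P d i)) W0 W b x d i :=
        ih fun d' hd' => h d' (hd'.trans (Nat.lt_succ_self d))
      simp only [preactNet, linNetAux, Pi.add_apply]
      congr 1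
      apply congrArg (fun v => Matrix.mulVec (W (d+1)) v i)
      funext j
      rw [hcompat, h d (Nat.lt_succ_self d) j, hd j]

/-- Generic convexity of a pattern set. -/
lemma convex_pattern {m k : ℕ} (n : ℕ) (φ : ℝ → ℝ) (g : ℝ → ℤ) (α β : ℤ → ℝ)
    (hcompat : ∀ v, φ v = α (g v) * v + β (g v))
    (hconv : ∀ (p : ℤ) (a c : ℝ), Convex ℝ {t : ℝ | g (a * t + c) = p})
    (W0 : Matrix (Fin k) (Fin m) ℝ) (W : ℕ → Matrix (Fin k) (Fin k) ℝ)
    (b : ℕ → Fin k → ℝ) (x₀ x₁ : Fin m → ℝ) (P : Fin n → Fin k → ℤ) :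
    Convex ℝ {t : ℝ | ∀ (d : Fin n) (i : Fin k),
      g (preactNet φ W0 W b (fun j => x₀ j + t * (x₁ j - x₀ j)) (d : ℕ) i) = P d i} := by
  classical
  set P' : ℕ → Fin k → ℤ := fun d i => if h : d < n then P ⟨d, h⟩ i else 0 with hP'
  have haff := fun d => linNetAux_affine (fun d i => α (P' d i)) (fun d i => β (P' d i)) W0 W b x₀ x₁ d
  choose a c hac using haff
  have hset : {t : ℝ | ∀ (d : Fin n) (i : Fin k),
      g (preactNet φ W0 W b (fun j => x₀ j + t * (x₁ j - x₀ j)) (d : ℕ) i) = P d i}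
      = ⋂ (d : Fin n), ⋂ (i : Fin k), {t : ℝ | g (a d i * t + c d i) = P d i} := by
    ext t
    simp only [Set.mem_setOf_eq, Set.mem_iInter]
    set x : Fin m → ℝ := fun j => x₀ j + t * (x₁ j - x₀ j) with hxdef
    constructor
    · intro h d i
      have hall : ∀ d' : ℕ, d' < (d : ℕ) → ∀ i', g (preactNet φ W0 W b x d' i') = P' d' i' := by
        intro d' hd' i'
        have hn : d' < n := hd'.trans d.2
        have := h ⟨d', hn⟩ i'
        simp only [hP', hn, dif_pos]
        exact this
      have := preactNet_eq_linNetAux φ g α β hcompat P' W0 W b x (d : ℕ) hall i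
      rw [← hac (d : ℕ) t i, ← this]
      exact h d i
    · intro h
      have key : ∀ d : ℕ, d < n → ∀ i, g (preactNet φ W0 W b x d i) = P' d i := by
        intro d
        induction d using Nat.strong_induction_on with
        | _ d ih =>
          intro hd i
          have hpre := preactNet_eq_linNetAux φ g α β hcompat P' W0 W b x d
            (fun d' hd' i' => ih d' hd' (hd'.trans hd) i') i
          rw [hpre, hac d t i]
          have := h ⟨d, hd⟩ i
          simpa [hP', hd] using this
      intro d i
      have := key (d : ℕ) d.2 i
      simpa [hP', d.2] using this
  rw [hset]
  exact convex_iInter fun d => convex_iInter fun i => hconv _ _ _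

lemma convex_affine_cond (S : Set ℝ) (hS : Convex ℝ S) (a c : ℝ) :
    Convex ℝ {t : ℝ | a * t + c ∈ S} := by
  have h : {t : ℝ | a * t + c ∈ S}
      = (AffineMap.lineMap c (a + c) : ℝ →ᵃ[ℝ] ℝ) ⁻¹' S := by
    ext t
    simp only [Set.mem_setOf_eq, Set.mem_preimage, AffineMap.lineMap_apply, vsub_eq_sub,
      vadd_eq_add, smul_eq_mul, add_sub_cancel_right]
    rw [mul_comm]
  rw [h]
  exact hS.affine_preimage _

/-- **Transitions and activation patterns along an affine trajectory.**
For a ReLU or hard-tanh network and an affine trajectory `x(t) = x₀ + t (x₁ − x₀)` with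
`x₀ ≠ x₁`, the set of parameters `t ∈ ℝ` realizing any given activation pattern `P` is
convex (an interval).  Consequently `ℝ` is partitioned into intervals, separated by the
neuron transition points, each carrying a unique activation pattern. -/
theorem activationPattern_interval_of_affine_trajectory (m k n : ℕ)
    (W0 : Matrix (Fin k) (Fin m) ℝ) (W : ℕ → Matrix (Fin k) (Fin k) ℝ)
    (b : ℕ → Fin k → ℝ) (x₀ x₁ : Fin m → ℝ) (hx : x₀ ≠ x₁) :
    (∀ P : Fin n → Fin k → ℤ,
      Convex ℝ {t : ℝ |
        reluPatternAt m k n W0 W b (fun j => x₀ j + t * (x₁ j - x₀ j)) = P}) ∧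
    (∀ P : Fin n → Fin k → ℤ,
      Convex ℝ {t : ℝ |
        htPatternAt m k n W0 W b (fun j => x₀ j + t * (x₁ j - x₀ j)) = P}) := by
  constructor
  · intro P
    have h := convex_pattern n (fun u => max u 0)
      (fun v => if 0 < v then 1 else 0)
      (fun p => if p = 1 then 1 else 0) (fun _ => 0)
      (by
        intro v
        by_cases hv : 0 < v
        · simp [hv, le_of_lt hv]
        · simp [hv, le_of_not_gt hv])
      (by
        intro p a c
        by_cases hp : p = (1 : ℤ)
        · have heq : {t : ℝ | (if 0 < a * t + c then (1 : ℤ) else 0) = p}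
              = {t : ℝ | a * t + c ∈ Set.Ioi (0 : ℝ)} := by
            ext t
            simp only [Set.mem_setOf_eq, Set.mem_Ioi]
            by_cases h : 0 < a * t + c <;> simp [h, hp]
          rw [heq]; exact convex_affine_cond _ (convex_Ioi 0) a c
        · by_cases hp0 : p = (0 : ℤ)
          · have heq : {t : ℝ | (if 0 < a * t + c then (1 : ℤ) else 0) = p}
                = {t : ℝ | a * t + c ∈ Set.Iic (0 : ℝ)} := by
              ext t
              simp only [Set.mem_setOf_eq, Set.mem_Iic]
              by_cases h : 0 < a * t + c <;> simp [h, hp0, le_of_not_gt]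
            rw [heq]; exact convex_affine_cond _ (convex_Iic 0) a c
          · have heq : {t : ℝ | (if 0 < a * t + c then (1 : ℤ) else 0) = p} = ∅ := by
              ext t; by_cases h : 0 < a * t + c <;> simp [h, hp, hp0, Ne.symm]
            rw [heq]; exact convex_empty)
      W0 W b x₀ x₁ P
    convert h using 2 with t
    simp only [reluPatternAt, funext_iff, eq_iff_iff]
  · intro P
    have h := convex_pattern n (fun u => max (-1) (min 1 u))
      (fun v => if v ≤ -1 then -1 else if 1 ≤ v then 1 else 0)
      (fun p => if p = 0 then 1 else 0)
      (fun p => if p = -1 then -1 else if p = 1 then 1 else 0)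
      (by
        intro v
        by_cases h1 : v ≤ -1
        · have : min 1 v ≤ -1 := le_trans (min_le_right _ _) h1
          simp [h1, max_eq_left this]
        · by_cases h2 : (1 : ℝ) ≤ v
          · have hm : min 1 v = 1 := min_eq_left h2
            simp [h1, h2, hm, max_eq_right (by norm_num : (-1:ℝ) ≤ 1)]
          · have hm : min 1 v = v := min_eq_right (le_of_not_ge h2)
            have : (-1 : ℝ) ≤ v := le_of_lt (not_le.mp h1)
            simp [h1, h2, hm, max_eq_right this])
      (by
        intro p a c
        by_cases hpm : p = (-1 : ℤ)
        · have heq : {t : ℝ | (if a * t + c ≤ -1 then (-1 : ℤ)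
              else if 1 ≤ a * t + c then 1 else 0) = p}
              = {t : ℝ | a * t + c ∈ Set.Iic (-1 : ℝ)} := by
            ext t
            simp only [Set.mem_setOf_eq, Set.mem_Iic]
            by_cases h1 : a * t + c ≤ -1
            · simp [h1, hpm]
            · by_cases h2 : (1 : ℝ) ≤ a * t + c <;> simp [h1, h2, hpm]
          rw [heq]; exact convex_affine_cond _ (convex_Iic _) a c
        · by_cases hp1 : p = (1 : ℤ)
          · have heq : {t : ℝ | (if a * t + c ≤ -1 then (-1 : ℤ)
                else if 1 ≤ a * t + c then 1 else 0) = p}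
                = {t : ℝ | a * t + c ∈ Set.Ici (1 : ℝ)} := by
              ext t
              simp only [Set.mem_setOf_eq, Set.mem_Ici]
              by_cases h1 : a * t + c ≤ -1
              · simp only [h1, if_true]
                constructor
                · intro hh; rw [hp1] at hh; norm_num at hh
                · intro hh; linarith
              · by_cases h2 : (1 : ℝ) ≤ a * t + c <;> simp [h1, h2, hp1]
            rw [heq]; exact convex_affine_cond _ (convex_Ici _) a c
          · by_cases hp0 : p = (0 : ℤ)
            · have heq : {t : ℝ | (if a * t + c ≤ -1 then (-1 : ℤ)
                  else if 1 ≤ a * t + c then 1 else 0) = p}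
                  = {t : ℝ | a * t + c ∈ Set.Ioo (-1 : ℝ) 1} := by
                ext t
                simp only [Set.mem_setOf_eq, Set.mem_Ioo]
                by_cases h1 : a * t + c ≤ -1
                · simp only [h1, if_true]
                  constructor
                  · intro hh; rw [hp0] at hh; norm_num at hh
                  · intro hh; linarith [hh.1]
                · by_cases h2 : (1 : ℝ) ≤ a * t + c
                  · simp only [h1, if_false, h2, if_true]
                    constructor
                    · intro hh; rw [hp0] at hh; norm_num at hh
                    · intro hh; linarith [hh.2]
                  · simp [h1, h2, hp0, not_le.mp h1, not_le.mp h2]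
              rw [heq]; exact convex_affine_cond _ (convex_Ioo _ _) a c
            · have heq : {t : ℝ | (if a * t + c ≤ -1 then (-1 : ℤ)
                  else if 1 ≤ a * t + c then 1 else 0) = p} = ∅ := by
                ext t
                by_cases h1 : a * t + c ≤ -1
                · simp [h1, hpm, Ne.symm]
                · by_cases h2 : (1 : ℝ) ≤ a * t + c <;>
                    simp [h1, h2, hp1, hp0, Ne.symm]
              rw [heq]; exact convex_empty)
      W0 W b x₀ x₁ P
    convert h using 2 with t
    simp only [htPatternAt, funext_iff, eq_iff_iff]
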